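/- Let z = (q, p) ∈ ℝ^{2n} with q_1 = ⋯ = q_n and p_1 = ⋯ = p_n. Then L(z) has exactly ⌊(n−1)/2⌋ distinct real eigenvalues whose eigenspace is two-dimensional, and L̄(z) has exactly ⌊n/2⌋ distinct real eigenvalues whose eigenspace is two-dimensional; in particular these numbers sum to n − 1. -/

import Mathlib

open Matrix BigOperators

noncomputable def bfun {n : ℕ} [NeZero n] (z : (Fin n → ℝ) × (Fin n → ℝ)) (j : Fin n) : ℝ :=
  Real.exp ((z.1 j - z.1 (j + 1)) / 2)

/-- The Lax matrix `L`. -/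
noncomputable def Lax {n : ℕ} [NeZero n] (z : (Fin n → ℝ) × (Fin n → ℝ)) :
    Matrix (Fin n) (Fin n) ℝ := fun r s =>
  (if r = s then z.2 r else 0) + (if r + 1 = s then bfun z r else 0) +
    (if s + 1 = r then bfun z s else 0)

/-- The sign `σ_r`, equal to `-1` for the index corresponding to `b_n`. -/
noncomputable def sgn {n : ℕ} [NeZero n] (j : Fin n) : ℝ := if j + 1 = 0 then -1 else 1

/-- The Lax matrix `L̄` obtained from `L` by `b_n ↦ -b_n`. -/
noncomputable def LaxBar {n : ℕ} [NeZero n] (z : (Fin n → ℝ) × (Fin n → ℝ)) :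
    Matrix (Fin n) (Fin n) ℝ := fun r s =>
  (if r = s then z.2 r else 0) + (if r + 1 = s then sgn r * bfun z r else 0) +
    (if s + 1 = r then sgn s * bfun z s else 0)

/-- The canonical Poisson bracket on `ℝ^{2n}`. -/
noncomputable def pb {n : ℕ} (f g : (Fin n → ℝ) × (Fin n → ℝ) → ℝ)
    (z : (Fin n → ℝ) × (Fin n → ℝ)) : ℝ :=
  ∑ j : Fin n,
    (fderiv ℝ f z (Pi.single j 1, 0) * fderiv ℝ g z (0, Pi.single j 1) -
     fderiv ℝ f z (0, Pi.single j 1) * fderiv ℝ g z (Pi.single j 1, 0))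

/-- The integrals of motion `F_j = (1/j) Tr L^j`. -/
noncomputable def F {n : ℕ} [NeZero n] (j : ℕ) (z : (Fin n → ℝ) × (Fin n → ℝ)) : ℝ :=
  (1 / j : ℝ) * (Lax z ^ j).trace

/-- The map `F = (F_1, …, F_n) : ℝ^{2n} → ℝ^n`. -/
noncomputable def Fvec {n : ℕ} [NeZero n] (z : (Fin n → ℝ) × (Fin n → ℝ)) : Fin n → ℝ :=
  fun j => F (j.val + 1) z

/-- The corank of `dF(z)`. -/
noncomputable def corank (n : ℕ) [NeZero n] (z : (Fin n → ℝ) × (Fin n → ℝ)) : ℕ :=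
  n - Module.finrank ℝ (LinearMap.range (fderiv ℝ (Fvec (n := n)) z).toLinearMap)

/-- Number of (real) eigenvalues of `A` with two-dimensional eigenspace. -/
noncomputable def nuCount {n : ℕ} (A : Matrix (Fin n) (Fin n) ℝ) : ℕ :=
  {μ : ℝ | Module.finrank ℝ (LinearMap.ker (Matrix.toLin' (A - μ • 1))) = 2}.ncard

/-- solution of the three-term recurrence with initial data a, b. -/
noncomputable def wseq (lam a b : ℝ) : ℕ → ℝ
  | 0 => a
  | 1 => b
  | (j+2) => lam * wseq lam a b (j+1) - wseq lam a b j

lemma wseq_zero (lam a b : ℝ) : wseq lam a b 0 = a := rfl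
lemma wseq_one (lam a b : ℝ) : wseq lam a b 1 = b := rfl
lemma wseq_rec (lam a b : ℝ) (j : ℕ) :
    wseq lam a b (j+2) = lam * wseq lam a b (j+1) - wseq lam a b j := rfl

lemma wseq_lin (lam a b : ℝ) (j : ℕ) :
    wseq lam a b j = a * wseq lam 1 0 j + b * wseq lam 0 1 j := by
  induction j using Nat.strong_induction_on with
  | _ j ih =>
    match j with
    | 0 => simp [wseq_zero]
    | 1 => simp [wseq_one]
    | (j+2) =>
      rw [wseq_rec, wseq_rec, wseq_rec, ih (j+1) (by omega), ih j (by omega)]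
      ring

lemma wseq_zero_zero (lam : ℝ) (j : ℕ) : wseq lam 0 0 j = 0 := by
  induction j using Nat.strong_induction_on with
  | _ j ih =>
    match j with
    | 0 => rfl
    | 1 => rfl
    | (j+2) => rw [wseq_rec, ih (j+1) (by omega), ih j (by omega)]; ring

/-- e_{j+1} = -u_j -/
lemma wseq_e_u (lam : ℝ) (j : ℕ) : wseq lam 1 0 (j+1) = - wseq lam 0 1 j := by
  induction j using Nat.strong_induction_on with
  | _ j ih =>
    match j with
    | 0 => simp [wseq_zero, wseq_one]
    | 1 => simp [wseq_rec, wseq_zero, wseq_one]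
    | (j+2) =>
      rw [show j+2+1 = (j+1)+2 from rfl, wseq_rec, ih (j+1) (by omega), ih j (by omega),
        wseq_rec lam 0 1 j]
      ring

lemma wseq_sin (θ : ℝ) (j : ℕ) : wseq (2 * Real.cos θ) 0 1 j * Real.sin θ = Real.sin (j * θ) := by
  induction j using Nat.strong_induction_on with
  | _ j ih =>
    match j with
    | 0 => simp [wseq_zero]
    | 1 => simp [wseq_one]
    | (j+2) =>
      have h1 := ih (j+1) (by omega)
      have h2 := ih j (by omega)
      rw [wseq_rec]
      push_cast at h1 h2 ⊢
      have e2 : Real.sin ((j:ℝ)*θ) =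
          Real.sin (((j:ℝ)+1)*θ)*Real.cos θ - Real.cos (((j:ℝ)+1)*θ)*Real.sin θ := by
        rw [show (j:ℝ)*θ = ((j:ℝ)+1)*θ - θ by ring, Real.sin_sub]
      have e3 : Real.sin (((j:ℝ)+2)*θ) =
          Real.sin (((j:ℝ)+1)*θ)*Real.cos θ + Real.cos (((j:ℝ)+1)*θ)*Real.sin θ := by
        rw [show ((j:ℝ)+2)*θ = ((j:ℝ)+1)*θ + θ by ring, Real.sin_add]
      rw [e3]
      linear_combination (2*Real.cos θ) * h1 - h2 - e2

section
open Real
lemma wseq_growth {lam : ℝ} (h : 2 ≤ lam) (j : ℕ) :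
    (j : ℝ) ≤ wseq lam 0 1 j ∧ 1 ≤ wseq lam 0 1 (j+1) - wseq lam 0 1 j := by
  induction j with
  | zero => simp [wseq]
  | succ j ih =>
    obtain ⟨h1, h2⟩ := ih
    have hj : (j:ℝ) + 1 ≤ wseq lam 0 1 (j+1) := by linarith
    constructor
    · push_cast; linarith
    · rw [wseq_rec]
      nlinarith

lemma wseq_neg (lam : ℝ) (j : ℕ) :
    wseq (-lam) 0 1 j = (-1)^(j+1) * wseq lam 0 1 j := by
  induction j using Nat.strong_induction_on with
  | _ j ih =>
    match j with
    | 0 => simp [wseq]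
    | 1 => simp [wseq]
    | (j+2) =>
      rw [wseq_rec, wseq_rec, ih (j+1) (by omega), ih j (by omega)]
      ring

lemma cos_nat_mul_pi2 (m : ℕ) : Real.cos (m * π) = (-1)^m := by
  induction m with
  | zero => simp
  | succ m ih =>
    push_cast
    rw [show ((m:ℝ)+1)*π = (m:ℝ)*π + π by ring, Real.cos_add_pi, ih]
    ring

/-- Lemma B -/
lemma chebyshev_char {n : ℕ} (hn : 1 ≤ n) {lam ε : ℝ} (hε : ε = 1 ∨ ε = -1) :
    (wseq lam 0 1 n = 0 ∧ wseq lam 0 1 (n+1) = ε) ↔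
      ∃ m : ℕ, 1 ≤ m ∧ m ≤ n - 1 ∧ lam = 2 * Real.cos (π * m / n) ∧ ((-1 : ℝ))^m = ε := by
  have hn' : (0:ℝ) < n := by exact_mod_cast hn
  constructor
  · rintro ⟨h0, h1⟩
    -- exclude |lam| ≥ 2
    have hlt : lam < 2 := by
      by_contra hc
      have := (wseq_growth (by linarith) n).1
      have : (0:ℝ) < (n:ℝ) := hn'
      linarith [(wseq_growth (by linarith : (2:ℝ) ≤ lam) n).1]
    have hgt : -2 < lam := by
      by_contra hc
      push_neg at hc
      have h2 : (2:ℝ) ≤ -lam := by linarith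
      have := (wseq_growth h2 n).1
      rw [wseq_neg lam n, h0, mul_zero] at this
      linarith
    set θ := Real.arccos (lam/2) with hθ
    have hc1 : lam/2 < 1 := by linarith
    have hc2 : -1 < lam/2 := by linarith
    have hθpos : 0 < θ := Real.arccos_pos.2 hc1
    have hcos : Real.cos θ = lam/2 := Real.cos_arccos (by linarith) (by linarith)
    have hθlt : θ < π := by
      rcases lt_or_eq_of_le (Real.arccos_le_pi (lam/2)) with h | h
      · exact h
      · exfalso; rw [hθ, h] at hcos; rw [Real.cos_pi] at hcos; linarith
    have hsin : 0 < Real.sin θ := Real.sin_pos_of_pos_of_lt_pi hθpos hθlt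
    have hlam : lam = 2 * Real.cos θ := by rw [hcos]; ring
    have hs0 : Real.sin (n * θ) = 0 := by
      rw [← wseq_sin θ n, ← hlam, h0, zero_mul]
    obtain ⟨k, hk⟩ := Real.sin_eq_zero_iff.1 hs0
    have hkpos : 0 < k := by
      by_contra hk0
      push_neg at hk0
      have : (k:ℝ) * π ≤ 0 := by
        apply mul_nonpos_of_nonpos_of_nonneg
        · exact_mod_cast hk0
        · exact Real.pi_pos.le
      nlinarith [mul_pos hn' hθpos]
    have hklt : (k:ℝ) < n := by
      have : (k:ℝ) * π < (n:ℝ) * π := by rw [hk]; exact (mul_lt_mul_iff_right₀ hn').2 hθlt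
      exact lt_of_mul_lt_mul_right this Real.pi_pos.le
    set m := k.toNat with hm
    have hmk : (m : ℝ) = (k : ℝ) := by exact_mod_cast Int.toNat_of_nonneg hkpos.le
    have hθm : θ = π * m / n := by
      rw [hmk, eq_div_iff hn'.ne']
      nlinarith [hk]
    refine ⟨m, ?_, ?_, by rw [hlam, hθm], ?_⟩
    · omega
    · have : (m:ℝ) < n := by rw [hmk]; exact hklt
      have : m < n := by exact_mod_cast this
      omega
    · have := wseq_sin θ (n+1)
      rw [← hlam, h1] at this
      have e : ((n:ℝ)+1) * θ = (m:ℝ)*π + θ := by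
        rw [hmk]; nlinarith [hk]
      push_cast at this
      rw [e, Real.sin_add, Real.sin_nat_mul_pi, cos_nat_mul_pi2] at this
      have := mul_left_cancel₀ hsin.ne' (by linarith : Real.sin θ * ε = Real.sin θ * ((-1:ℝ)^m))
      linarith
  · rintro ⟨m, hm1, hm2, hlam, hpar⟩
    have hθpos : 0 < π * m / n := by
      apply div_pos (mul_pos Real.pi_pos (by exact_mod_cast hm1)) hn'
    have hmn : (m : ℝ) < n := by exact_mod_cast (by omega : m < n)
    have hθlt : π * m / n < π := by
      rw [div_lt_iff₀ hn']
      nlinarith [Real.pi_pos]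
    set θ := π * m / n with hθ
    have hsin : 0 < Real.sin θ := Real.sin_pos_of_pos_of_lt_pi hθpos hθlt
    have hnθ : (n:ℝ) * θ = m * π := by rw [hθ]; field_simp
    subst hlam
    constructor
    · have := wseq_sin θ n
      rw [hnθ, Real.sin_nat_mul_pi] at this
      exact (mul_eq_zero.1 this).resolve_right hsin.ne'
    · have := wseq_sin θ (n+1)
      have e : ((n:ℝ)+1) * θ = (m:ℝ)*π + θ := by rw [← hnθ]; ring
      push_cast at this
      rw [e, Real.sin_add, Real.sin_nat_mul_pi, cos_nat_mul_pi2] at this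
      rw [hpar] at this
      have := mul_right_cancel₀ hsin.ne' (by linarith : wseq (2*Real.cos θ) 0 1 (n+1) * Real.sin θ = ε * Real.sin θ)
      exact this

end

noncomputable def Jmat (n : ℕ) [NeZero n] (lam ε : ℝ) : Matrix (Fin n) (Fin n) ℝ := fun r s =>
  (if r = s then -lam else 0) + (if r + 1 = s then (if r + 1 = 0 then ε else 1) else 0) +
    (if s + 1 = r then (if s + 1 = 0 then ε else 1) else 0)

lemma Jmat_mulVec {n : ℕ} [NeZero n] (lam ε : ℝ) (v : Fin n → ℝ) (r : Fin n) :
    (Jmat n lam ε).mulVec v r =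
      -(lam * v r) + (if r + 1 = 0 then ε else 1) * v (r + 1)
        + (if r = 0 then ε else 1) * v (r - 1) := by
  unfold Jmat Matrix.mulVec dotProduct
  simp only [add_mul, Finset.sum_add_distrib]
  have e1 : ∑ s : Fin n, (if r = s then -lam else 0) * v s = -(lam * v r) := by
    rw [Finset.sum_eq_single r]
    · simp
    · intro s _ hs; simp [Ne.symm hs, hs]
    · simp
  have e2 : ∑ s : Fin n, (if r + 1 = s then (if r + 1 = 0 then ε else 1) else 0) * v s
      = (if r + 1 = 0 then ε else 1) * v (r + 1) := by
    rw [Finset.sum_eq_single (r+1)]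
    · simp
    · intro s _ hs; rw [if_neg (by exact fun h => hs h.symm), zero_mul]
    · simp
  have e3 : ∑ s : Fin n, (if s + 1 = r then (if s + 1 = 0 then ε else 1) else 0) * v s
      = (if r = 0 then ε else 1) * v (r - 1) := by
    rw [Finset.sum_eq_single (r-1)]
    · simp [sub_add_cancel]
    · intro s _ hs
      have : s + 1 ≠ r := by
        intro h; apply hs; rw [← h]; abel
      simp [this]
    · simp
  rw [e1, e2, e3]

section
variable {n : ℕ} [NeZero n]
open Fin.NatCast

lemma fin_cast_ne_zero {j : ℕ} (h1 : 0 < j) (h2 : j < n) : ((j : Fin n)) ≠ 0 := by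
  intro h
  have := congrArg Fin.val h
  rw [Fin.val_cast_of_lt h2] at this
  simp at this
  omega

lemma fin_cast_succ (j : ℕ) : ((j + 1 : ℕ) : Fin n) = (j : Fin n) + 1 := by push_cast; ring

lemma mem_ker_jmat (hn : 2 ≤ n) (lam ε : ℝ) (hε : ε * ε = 1) (v : Fin n → ℝ) :
    (Jmat n lam ε).mulVec v = 0 ↔
      ((∀ j : ℕ, j < n → v j = wseq lam (v 0) (v 1) j) ∧
       wseq lam (v 0) (v 1) n = ε * v 0 ∧ wseq lam (v 0) (v 1) (n+1) = ε * v 1) := by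
  set a := v 0 with ha
  set b := v 1 with hb
  set w := wseq lam a b with hw
  have wrec : ∀ j : ℕ, w (j + 2) = lam * w (j + 1) - w j := fun j => rfl
  have w0 : w 0 = a := rfl
  have w1 : w 1 = b := rfl
  have hwn : w n = lam * w (n - 1) - w (n - 2) := by
    have e : n - 2 + 2 = n := by omega
    have e' : n - 2 + 1 = n - 1 := by omega
    have h := wrec (n - 2); rw [e, e'] at h; exact h
  have hwn1 : w (n + 1) = lam * w n - w (n - 1) := by
    have e : n - 1 + 2 = n + 1 := by omega
    have e' : n - 1 + 1 = n := by omega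
    have h := wrec (n - 1); rw [e, e'] at h; exact h
  -- generic Fin facts
  have hone : ((1 : ℕ) : Fin n) = 1 := Nat.cast_one
  have h1ne : (1 : Fin n) ≠ 0 := by
    rw [← hone]; exact fin_cast_ne_zero (by omega) (by omega)
  have hn1 : ((n - 1 : ℕ) : Fin n) + 1 = 0 := by
    rw [← fin_cast_succ]
    have : n - 1 + 1 = n := by omega
    rw [this, Fin.natCast_self]
  have hn1ne : ((n - 1 : ℕ) : Fin n) ≠ 0 := fin_cast_ne_zero (by omega) (by omega)
  have hsub : (0 : Fin n) - 1 = ((n - 1 : ℕ) : Fin n) := by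
    rw [eq_comm, eq_sub_iff_add_eq]; exact hn1
  have hn2 : ((n - 1 : ℕ) : Fin n) - 1 = ((n - 2 : ℕ) : Fin n) := by
    have e : n - 2 + 1 = n - 1 := by omega
    rw [← e, fin_cast_succ]
    abel
  constructor
  · intro h
    have hrow : ∀ r : Fin n, -(lam * v r) + (if r + 1 = 0 then ε else 1) * v (r + 1)
        + (if r = 0 then ε else 1) * v (r - 1) = 0 := by
      intro r; rw [← Jmat_mulVec]; exact congrFun h r
    have claim : ∀ j : ℕ, j < n → v j = w j := by
      intro j
      induction j using Nat.strong_induction_on with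
      | _ j ih =>
        match j with
        | 0 => intro _; rw [Nat.cast_zero, w0]
        | 1 => intro _; rw [hone, w1]
        | (j+2) =>
          intro hjn
          have h2 := hrow ((j + 1 : ℕ) : Fin n)
          have e1 : ((j+1 : ℕ) : Fin n) + 1 = ((j + 2 : ℕ) : Fin n) := by
            rw [fin_cast_succ (j+1)]
          have e2 : ((j+1 : ℕ) : Fin n) - 1 = ((j : ℕ) : Fin n) := by
            rw [fin_cast_succ]; abel
          rw [e1, e2, if_neg (fin_cast_ne_zero (by omega) hjn),
            if_neg (fin_cast_ne_zero (by omega) (by omega))] at h2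
          rw [ih (j+1) (by omega) (by omega), ih j (by omega) (by omega)] at h2
          rw [wrec]
          linarith
    have hA : w n = ε * a := by
      have h3 := hrow ((n - 1 : ℕ) : Fin n)
      rw [hn1, hn2, if_pos rfl, if_neg hn1ne,
        claim (n-1) (by omega), claim (n-2) (by omega)] at h3
      rw [hwn]; linarith
    refine ⟨claim, hA, ?_⟩
    · have h2 := hrow 0
      rw [zero_add, if_neg h1ne, if_pos rfl, hsub, claim (n-1) (by omega)] at h2
      have hrel : ε * w (n-1) = lam * a - b := by linarith
      have hrel' : w (n-1) = ε * (lam * a - b) := by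
        have h4 := congrArg (ε * ·) hrel
        simpa [← mul_assoc, hε] using h4
      rw [hwn1, hA, hrel']
      ring
  · rintro ⟨claim, hA, hB⟩
    funext r
    rw [Jmat_mulVec]
    simp only [Pi.zero_apply]
    have hr : ((r.val : ℕ) : Fin n) = r := Fin.cast_val_eq_self r
    rcases Nat.eq_zero_or_pos r.val with h0 | hpos
    · -- row 0
      have hr0 : r = 0 := by rw [← hr, h0]; rfl
      subst hr0
      rw [zero_add, if_neg h1ne, if_pos rfl, hsub, claim (n-1) (by omega)]
      have hrel : w (n-1) = ε * (lam * a - b) := by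
        have h5 : lam * w n - w (n-1) = ε * b := by rw [← hwn1]; exact hB
        rw [hA] at h5
        linear_combination -h5
      rw [hrel, ← ha, ← hb]
      linear_combination (lam * a - b) * hε
    · rcases Nat.lt_or_ge r.val (n-1) with hlt | hge
      · -- interior row
        obtain ⟨i, hi⟩ : ∃ i, r.val = i + 1 := ⟨r.val - 1, by omega⟩
        have e1 : r + 1 = ((i + 2 : ℕ) : Fin n) := by
          rw [← hr, hi, fin_cast_succ (i+1)]
        have e2 : r - 1 = ((i : ℕ) : Fin n) := by
          rw [← hr, hi, fin_cast_succ]; abel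
        rw [e1, e2, if_neg (fin_cast_ne_zero (by omega) (by omega)),
          if_neg (by rw [← hr, hi]; exact fin_cast_ne_zero (by omega) (by omega))]
        rw [show v r = v ((r.val : ℕ) : Fin n) by rw [hr], hi,
          claim (i+1) (by omega), claim (i+2) (by omega), claim i (by omega)]
        rw [wrec]
        ring
      · -- row n-1
        have hrv : r.val = n - 1 := by omega
        have hr1 : r = ((n - 1 : ℕ) : Fin n) := by rw [← hr, hrv]
        subst hr1
        rw [hn1, hn2, if_pos rfl, if_neg hn1ne, claim (n-2) (by omega),
          claim (n-1) (by omega)]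
        have h6 : lam * w (n-1) - w (n-2) = ε * a := by rw [← hwn]; exact hA
        rw [← ha]
        linarith
end

section
variable {n : ℕ} [NeZero n]
open Fin.NatCast
lemma finrank_ker_jmat (hn : 2 ≤ n) (lam ε : ℝ) (hε : ε * ε = 1) :
    Module.finrank ℝ (LinearMap.ker (Matrix.toLin' (Jmat n lam ε))) = 2 ↔
      (wseq lam 0 1 n = 0 ∧ wseq lam 0 1 (n+1) = ε) := by
  have hv1 : (1 : Fin n).val = 1 := by
    rw [← Nat.cast_one (R := Fin n)]; exact Fin.val_cast_of_lt (by omega)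
  have hmem : ∀ x : Fin n → ℝ, x ∈ LinearMap.ker (Matrix.toLin' (Jmat n lam ε)) ↔
      (Jmat n lam ε).mulVec x = 0 := by
    intro x; rw [LinearMap.mem_ker, Matrix.toLin'_apply]
  constructor
  · intro hk
    -- use surjectivity of evaluation at (0,1)
    set K := LinearMap.ker (Matrix.toLin' (Jmat n lam ε)) with hK
    let φ : K →ₗ[ℝ] (Fin 2 → ℝ) :=
      LinearMap.pi (fun i => (LinearMap.proj (![0, 1] i) : (Fin n → ℝ) →ₗ[ℝ] ℝ).comp K.subtype)
    have hinj : Function.Injective φ := by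
      rw [← LinearMap.ker_eq_bot]
      rw [Submodule.eq_bot_iff]
      rintro ⟨x, hx⟩ hx0
      have h0 : x 0 = 0 := congrFun hx0 0
      have h1 : x 1 = 0 := congrFun hx0 1
      have := ((mem_ker_jmat hn lam ε hε x).1 ((hmem x).1 hx)).1
      have hxz : x = 0 := by
        funext j
        have hj := this j.val j.isLt
        rw [Fin.cast_val_eq_self] at hj
        rw [hj, h0, h1, wseq_zero_zero]
        rfl
      simp [hxz]
    have hsurj : Function.Surjective φ := by
      rw [← LinearMap.injective_iff_surjective_of_finrank_eq_finrank
        (by rw [hk, Module.finrank_fin_fun])]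
      exact hinj
    obtain ⟨⟨x, hx⟩, hφx⟩ := hsurj ![0, 1]
    have h0 : x 0 = 0 := congrFun hφx 0
    have h1 : x 1 = 1 := congrFun hφx 1
    obtain ⟨_, hA, hB⟩ := (mem_ker_jmat hn lam ε hε x).1 ((hmem x).1 hx)
    rw [h0, h1] at hA hB
    rw [mul_zero] at hA
    rw [mul_one] at hB
    exact ⟨hA, hB⟩
  · rintro ⟨h0, h1⟩
    have hu1 : wseq lam 0 1 (n-1) = -ε := by
      have e : n - 1 + 2 = n + 1 := by omega
      have e' : n - 1 + 1 = n := by omega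
      have h := wseq_rec lam 0 1 (n-1); rw [e, e', h0, h1] at h
      linarith
    set v1 : Fin n → ℝ := fun j => wseq lam 1 0 j.val with hv1d
    set v2 : Fin n → ℝ := fun j => wseq lam 0 1 j.val with hv2d
    have hv10 : v1 0 = 1 := rfl
    have hv11 : v1 1 = 0 := by rw [hv1d]; simp only [hv1]; rfl
    have hv20 : v2 0 = 0 := rfl
    have hv21 : v2 1 = 1 := by rw [hv2d]; simp only [hv1]; rfl
    have hm1 : (Jmat n lam ε).mulVec v1 = 0 := by
      rw [mem_ker_jmat hn lam ε hε]
      refine ⟨?_, ?_, ?_⟩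
      · intro j hj
        rw [hv10, hv11, hv1d]
        simp only
        rw [Fin.val_cast_of_lt hj]
      · rw [hv10, hv11, mul_one]
        have e : n - 1 + 1 = n := by omega
        have h := wseq_e_u lam (n-1); rw [e, hu1] at h

        rw [h]; ring
      · rw [hv10, hv11, mul_zero]
        have h := wseq_e_u lam n
        rw [h, h0, neg_zero]
    have hm2 : (Jmat n lam ε).mulVec v2 = 0 := by
      rw [mem_ker_jmat hn lam ε hε]
      refine ⟨?_, ?_, ?_⟩
      · intro j hj
        rw [hv20, hv21, hv2d]
        simp only
        rw [Fin.val_cast_of_lt hj]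
      · rw [hv20, hv21, mul_zero, h0]
      · rw [hv20, hv21, mul_one, h1]
    have hli : LinearIndependent ℝ ![v1, v2] := by
      rw [LinearIndependent.pair_iff]
      intro s t hst
      constructor
      · have := congrFun hst 0
        simp [hv10, hv20] at this
        simpa using this
      · have := congrFun hst 1
        simp [hv11, hv21] at this
        simpa using this
    have hspan : LinearMap.ker (Matrix.toLin' (Jmat n lam ε)) =
        Submodule.span ℝ (Set.range ![v1, v2]) := by
      apply le_antisymm
      · intro x hx
        obtain ⟨claim, -, -⟩ := (mem_ker_jmat hn lam ε hε x).1 ((hmem x).1 hx)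
        have hx' : x = x 0 • v1 + x 1 • v2 := by
          funext j
          have hj := claim j.val j.isLt
          rw [Fin.cast_val_eq_self] at hj
          rw [hj, wseq_lin]
          simp [hv1d, hv2d]
        rw [hx']
        apply Submodule.add_mem
        · exact Submodule.smul_mem _ _ (Submodule.subset_span ⟨0, rfl⟩)
        · exact Submodule.smul_mem _ _ (Submodule.subset_span ⟨1, rfl⟩)
      · rw [Submodule.span_le]
        rintro y ⟨i, rfl⟩
        fin_cases i
        · exact (hmem v1).2 hm1
        · exact (hmem v2).2 hm2
    rw [hspan, finrank_span_eq_card hli, Fintype.card_fin]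

end

lemma filter_parity_card (n : ℕ) :
    (((Finset.Ico 1 n).filter (fun m => Even m)).card = (n-1)/2) ∧
    (((Finset.Ico 1 n).filter (fun m => ¬ Even m)).card = n/2) := by
  induction n with
  | zero => simp
  | succ n ih =>
    rcases Nat.eq_zero_or_pos n with h | h
    · subst h; simp
    · have hins : Finset.Ico 1 (n+1) = insert n (Finset.Ico 1 n) := by
        rw [Nat.Ico_succ_right_eq_insert_Ico h]
      have hnm : n ∉ Finset.Ico 1 n := by simp
      obtain ⟨ih1, ih2⟩ := ih
      rcases Nat.even_or_odd n with he | ho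
      · have h2 : n % 2 = 0 := Nat.even_iff.1 he
        constructor
        · rw [hins, Finset.filter_insert, if_pos he,
            Finset.card_insert_of_notMem (fun hc => hnm (Finset.mem_of_mem_filter _ hc)), ih1]
          omega
        · rw [hins, Finset.filter_insert, if_neg (by simpa using he), ih2]
          omega
      · have h2 : n % 2 = 1 := Nat.odd_iff.1 ho
        have hne : ¬ Even n := Nat.not_even_iff_odd.2 ho
        constructor
        · rw [hins, Finset.filter_insert, if_neg hne, ih1]
          omega
        · rw [hins, Finset.filter_insert, if_pos hne,
            Finset.card_insert_of_notMem (fun hc => hnm (Finset.mem_of_mem_filter _ hc)), ih2]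
          omega

lemma count_set (n : ℕ) (hn : 2 ≤ n) (c ε : ℝ) :
    {μ : ℝ | ∃ m : ℕ, 1 ≤ m ∧ m ≤ n - 1 ∧ μ - c = 2 * Real.cos (Real.pi * m / n) ∧
      ((-1:ℝ))^m = ε}.ncard
    = ((Finset.Ico 1 n).filter (fun m => ((-1:ℝ))^m = ε)).card := by
  have hn' : (0:ℝ) < n := by positivity
  set F := (Finset.Ico 1 n).filter (fun m => ((-1:ℝ))^m = ε) with hF
  set f : ℕ → ℝ := fun m => c + 2 * Real.cos (Real.pi * m / n) with hf
  have hset : {μ : ℝ | ∃ m : ℕ, 1 ≤ m ∧ m ≤ n - 1 ∧ μ - c = 2 * Real.cos (Real.pi * m / n) ∧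
      ((-1:ℝ))^m = ε} = ↑(F.image f) := by
    ext μ
    simp only [Set.mem_setOf_eq, Finset.coe_image, Set.mem_image, Finset.mem_coe, hF,
      Finset.mem_filter, Finset.mem_Ico]
    constructor
    · rintro ⟨m, h1, h2, h3, h4⟩
      exact ⟨m, ⟨⟨h1, by omega⟩, h4⟩, by rw [hf]; simp only; linarith⟩
    · rintro ⟨m, ⟨⟨h1, h2⟩, h4⟩, h5⟩
      refine ⟨m, h1, by omega, ?_, h4⟩
      rw [← h5, hf]; simp only; ring
  rw [hset, Set.ncard_coe_finset]
  apply Finset.card_image_of_injOn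
  intro m1 hm1 m2 hm2 hfeq
  have hmem : ∀ m ∈ F, Real.pi * m / n ∈ Set.Icc 0 Real.pi := by
    intro m hm
    rw [hF, Finset.mem_filter, Finset.mem_Ico] at hm
    constructor
    · positivity
    · rw [div_le_iff₀ hn']
      have : (m:ℝ) ≤ n := by exact_mod_cast hm.1.2.le
      nlinarith [Real.pi_pos]
  have hcos : Real.cos (Real.pi * m1 / n) = Real.cos (Real.pi * m2 / n) := by
    have := hfeq
    rw [hf] at this
    simp only at this
    linarith
  have := Real.strictAntiOn_cos.injOn (hmem m1 hm1) (hmem m2 hm2) hcos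
  have hpi := Real.pi_pos
  field_simp at this
  exact_mod_cast this

section
variable {n : ℕ} [NeZero n]
open Fin.NatCast

lemma lax_sub_eq (z : (Fin n → ℝ) × (Fin n → ℝ))
    (hq : ∀ i j : Fin n, z.1 i = z.1 j) (hp : ∀ i j : Fin n, z.2 i = z.2 j) (μ : ℝ) :
    Lax z - μ • 1 = Jmat n (μ - z.2 0) 1 := by
  have hb : ∀ j : Fin n, bfun z j = 1 := by
    intro j; rw [bfun, hq j (j+1), sub_self, zero_div, Real.exp_zero]
  funext r s
  simp only [Lax, Jmat, Matrix.sub_apply, Matrix.smul_apply, Matrix.one_apply, smul_eq_mul,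
    hb, hp r 0]
  split_ifs <;> ring

lemma laxbar_sub_eq (z : (Fin n → ℝ) × (Fin n → ℝ))
    (hq : ∀ i j : Fin n, z.1 i = z.1 j) (hp : ∀ i j : Fin n, z.2 i = z.2 j) (μ : ℝ) :
    LaxBar z - μ • 1 = Jmat n (μ - z.2 0) (-1) := by
  have hb : ∀ j : Fin n, bfun z j = 1 := by
    intro j; rw [bfun, hq j (j+1), sub_self, zero_div, Real.exp_zero]
  funext r s
  simp only [LaxBar, Jmat, sgn, Matrix.sub_apply, Matrix.smul_apply, Matrix.one_apply,
    smul_eq_mul, hb, hp r 0, mul_one]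
  split_ifs <;> ring

end

/-- at an equal-position, equal-momentum point, L has exactly
⌊(n−1)/2⌋ doubly degenerate eigenvalues and L̄ exactly ⌊n/2⌋, summing to n−1. -/
theorem stmt11 (n : ℕ) [NeZero n] (hn : 2 ≤ n) (z : (Fin n → ℝ) × (Fin n → ℝ))
    (hq : ∀ i j : Fin n, z.1 i = z.1 j) (hp : ∀ i j : Fin n, z.2 i = z.2 j) :
    nuCount (Lax z) = (n - 1) / 2 ∧ nuCount (LaxBar z) = n / 2 ∧
    nuCount (Lax z) + nuCount (LaxBar z) = n - 1 := by

  set c := z.2 0 with hc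
  have key : ∀ ε : ℝ, ε = 1 ∨ ε = -1 →
      {μ : ℝ | Module.finrank ℝ (LinearMap.ker (Matrix.toLin' (Jmat n (μ - c) ε))) = 2}.ncard
      = ((Finset.Ico 1 n).filter (fun m => ((-1:ℝ))^m = ε)).card := by
    intro ε hε
    have hε2 : ε * ε = 1 := by rcases hε with h | h <;> rw [h] <;> norm_num
    have : {μ : ℝ | Module.finrank ℝ
          (LinearMap.ker (Matrix.toLin' (Jmat n (μ - c) ε))) = 2}
        = {μ : ℝ | ∃ m : ℕ, 1 ≤ m ∧ m ≤ n - 1 ∧ μ - c = 2 * Real.cos (Real.pi * m / n) ∧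
          ((-1:ℝ))^m = ε} := by
      ext μ
      rw [Set.mem_setOf_eq, Set.mem_setOf_eq, finrank_ker_jmat hn _ ε hε2,
        chebyshev_char (by omega) hε]
    rw [this, count_set n hn c ε]
  have hL : nuCount (Lax z) = (n-1)/2 := by
    have e : ∀ μ : ℝ, Lax z - μ • 1 = Jmat n (μ - c) 1 := lax_sub_eq z hq hp
    have e2 : nuCount (Lax z) = {μ : ℝ | Module.finrank ℝ
        (LinearMap.ker (Matrix.toLin' (Jmat n (μ - c) 1))) = 2}.ncard := by
      unfold nuCount
      congr 1
      ext μ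
      rw [Set.mem_setOf_eq, Set.mem_setOf_eq, e μ]
    rw [e2, key 1 (Or.inl rfl)]
    rw [show (Finset.Ico 1 n).filter (fun m => ((-1:ℝ))^m = 1)
        = (Finset.Ico 1 n).filter (fun m => Even m) from
      Finset.filter_congr (fun m _ => by
        constructor
        · intro h
          by_contra hodd
          rw [Odd.neg_one_pow (Nat.not_even_iff_odd.1 hodd)] at h
          norm_num at h
        · intro h; rw [Even.neg_one_pow h])]
    exact (filter_parity_card n).1
  have hLb : nuCount (LaxBar z) = n/2 := by
    have e : ∀ μ : ℝ, LaxBar z - μ • 1 = Jmat n (μ - c) (-1) := laxbar_sub_eq z hq hp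
    have e2 : nuCount (LaxBar z) = {μ : ℝ | Module.finrank ℝ
        (LinearMap.ker (Matrix.toLin' (Jmat n (μ - c) (-1)))) = 2}.ncard := by
      unfold nuCount
      congr 1
      ext μ
      rw [Set.mem_setOf_eq, Set.mem_setOf_eq, e μ]
    rw [e2, key (-1) (Or.inr rfl)]
    rw [show (Finset.Ico 1 n).filter (fun m => ((-1:ℝ))^m = -1)
        = (Finset.Ico 1 n).filter (fun m => ¬ Even m) from
      Finset.filter_congr (fun m _ => by
        constructor
        · intro h
          intro heven
          rw [Even.neg_one_pow heven] at h
          norm_num at h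
        · intro h; rw [Odd.neg_one_pow (Nat.not_even_iff_odd.1 h)])]
    exact (filter_parity_card n).2
  exact ⟨hL, hLb, by rw [hL, hLb]; omega⟩
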